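/- Let Γ be a countable discrete group and let s ∈ Γ with s ≠ e. Then the continuous extension to the Stone–Čech compactification βΓ of the left translation map t ↦ st on Γ has no fixed points; that is, the left translation action of Γ on βΓ is free. -/

import Mathlib

open Fin.NatCast in
lemma exists_int_coloring (n : ℕ) (hn : n ≠ 1) :
    ∃ f : ℤ → Fin 3, ∀ a b : ℤ, a ≡ b + 1 [ZMOD (n : ℤ)] → f a ≠ f b := by
  rcases Nat.eq_zero_or_pos n with h0 | hpos
  · subst h0
    refine ⟨fun k => ((k.natAbs % 2 : ℕ) : Fin 3), fun a b hab => ?_⟩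
    have : a = b + 1 := by simpa [Int.ModEq] using hab
    subst this
    intro h
    apply_fun Fin.val at h
    simp only [Fin.val_natCast] at h
    omega
  · have hn2 : 2 ≤ n := by omega
    refine ⟨fun k => if (k % (n : ℤ)).toNat = n - 1 ∧ (n - 1) % 2 = 0 then 2
      else (((k % (n : ℤ)).toNat % 2 : ℕ) : Fin 3), fun a b hab => ?_⟩
    have hnz : (0 : ℤ) < (n : ℤ) := by exact_mod_cast hpos
    have hb0 : 0 ≤ b % (n : ℤ) := Int.emod_nonneg _ (by positivity)
    have hblt : b % (n : ℤ) < n := Int.emod_lt_of_pos _ hnz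
    have hone : (1 : ℤ) % (n : ℤ) = 1 := Int.emod_eq_of_lt (by omega) (by omega)
    have ha : a % (n : ℤ) = (b % (n : ℤ) + 1) % (n : ℤ) := by
      rw [hab, Int.add_emod, hone]
    have hBlt : (b % (n : ℤ)).toNat < n := by omega
    have hA : ((b % (n : ℤ)).toNat + 1 = n ∧ (a % (n : ℤ)).toNat = 0) ∨
        ((b % (n : ℤ)).toNat + 1 ≠ n ∧ (a % (n : ℤ)).toNat = (b % (n : ℤ)).toNat + 1) := by
      rcases eq_or_ne ((b % (n : ℤ)).toNat + 1) n with hcase | hcase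
      · refine Or.inl ⟨hcase, ?_⟩
        have heq : (b % (n : ℤ) + 1) = (n : ℤ) := by omega
        rw [ha, heq, Int.emod_self]
        rfl
      · refine Or.inr ⟨hcase, ?_⟩
        have h1 : (b % (n : ℤ) + 1) % (n : ℤ) = b % (n : ℤ) + 1 :=
          Int.emod_eq_of_lt (by omega) (by omega)
        rw [ha, h1]
        omega
    intro h
    apply_fun Fin.val at h
    revert h
    dsimp only
    split_ifs <;> simp only [Fin.val_natCast, Fin.val_two] <;> omega

lemma exists_group_coloring (Γ : Type*) [Group Γ] (s : Γ) (hs : s ≠ 1) :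
    ∃ c : Γ → Fin 3, ∀ t, c (s * t) ≠ c t := by
  obtain ⟨f, hf⟩ := exists_int_coloring (orderOf s)
    (by simpa [orderOf_eq_one_iff] using hs)
  let r : Γ → Γ := fun t =>
    (Quotient.mk (QuotientGroup.rightRel (Subgroup.zpowers s)) t).out
  have hmem : ∀ t, t * (r t)⁻¹ ∈ Subgroup.zpowers s := by
    intro t
    have h : Quotient.mk (QuotientGroup.rightRel (Subgroup.zpowers s)) (r t) =
        Quotient.mk (QuotientGroup.rightRel (Subgroup.zpowers s)) t :=
      Quotient.out_eq _
    exact (QuotientGroup.rightRel_apply).mp (Quotient.exact h)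
  have hr : ∀ t, r (s * t) = r t := by
    intro t
    have h : Quotient.mk (QuotientGroup.rightRel (Subgroup.zpowers s)) (s * t) =
        Quotient.mk (QuotientGroup.rightRel (Subgroup.zpowers s)) t := by
      apply Quotient.sound
      refine (QuotientGroup.rightRel_apply).mpr ?_
      have : t * (s * t)⁻¹ = s⁻¹ := by group
      rw [this]
      exact inv_mem (Subgroup.mem_zpowers s)
    simp only [r, h]
  choose K hK using fun t => Subgroup.mem_zpowers_iff.mp (hmem t)
  refine ⟨fun t => f (K t), fun t => hf _ _ ?_⟩
  have key : s ^ K (s * t) = s ^ (K t + 1) := by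
    calc s ^ K (s * t) = (s * t) * (r (s * t))⁻¹ := hK _
      _ = s * (t * (r t)⁻¹) := by rw [hr, mul_assoc]
      _ = s * s ^ K t := by rw [hK]
      _ = s ^ K t * s := ((Commute.refl s).zpow_right (K t)).eq
      _ = s ^ (K t + 1) := (zpow_add_one s (K t)).symm
  exact zpow_eq_zpow_iff_modEq.mp key

/-- For a countable discrete group `Γ` and `s ≠ e` in `Γ`, the continuous extension
to the Stone–Čech compactification `βΓ` of the left translation `t ↦ s t` has no
fixed points; that is, the left translation action of `Γ` on `βΓ` is free. -/
theorem stoneCech_left_translation_free (Γ : Type*) [Group Γ] [Countable Γ]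
    [TopologicalSpace Γ] [DiscreteTopology Γ] (s : Γ) (hs : s ≠ 1) (x : StoneCech Γ) :
    stoneCechExtend (g := fun t : Γ => stoneCechUnit (s * t))
      continuous_of_discreteTopology x ≠ x := by
  intro hfix
  obtain ⟨c, hc⟩ := exists_group_coloring Γ s hs
  set T : StoneCech Γ → StoneCech Γ :=
    stoneCechExtend (g := fun t : Γ => stoneCechUnit (s * t))
      continuous_of_discreteTopology with hT
  set F : StoneCech Γ → Fin 3 :=
    stoneCechExtend (g := c) continuous_of_discreteTopology with hF
  set H : StoneCech Γ → Fin 3 × Fin 3 :=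
    stoneCechExtend (g := fun t : Γ => (c t, c (s * t)))
      continuous_of_discreteTopology with hH
  have extT : ∀ t : Γ, T (stoneCechUnit t) = stoneCechUnit (s * t) := fun t =>
    congrFun (stoneCechExtend_extends (g := fun t : Γ => stoneCechUnit (s * t))
      continuous_of_discreteTopology) t
  have extF : ∀ t : Γ, F (stoneCechUnit t) = c t := fun t =>
    congrFun (stoneCechExtend_extends (g := c) continuous_of_discreteTopology) t
  have extH : ∀ t : Γ, H (stoneCechUnit t) = (c t, c (s * t)) := fun t =>
    congrFun (stoneCechExtend_extends (g := fun t : Γ => (c t, c (s * t)))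
      continuous_of_discreteTopology) t
  have h1 : Prod.fst ∘ H = F := by
    apply stoneCech_hom_ext (continuous_fst.comp (continuous_stoneCechExtend _))
      (continuous_stoneCechExtend _)
    funext t
    show (H (stoneCechUnit t)).1 = F (stoneCechUnit t)
    rw [extH t, extF t]
  have h2 : Prod.snd ∘ H = F ∘ T := by
    apply stoneCech_hom_ext (continuous_snd.comp (continuous_stoneCechExtend _))
      ((continuous_stoneCechExtend _).comp (continuous_stoneCechExtend _))
    funext t
    show (H (stoneCechUnit t)).2 = F (T (stoneCechUnit t))
    rw [extH t, extT t, extF (s * t)]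
  have h3 : ∀ y, (H y).1 ≠ (H y).2 := by
    have hSclosed : IsClosed {p : Fin 3 × Fin 3 | p.1 ≠ p.2} := isClosed_discrete _
    have hsub : Set.range (stoneCechUnit : Γ → StoneCech Γ) ⊆
        H ⁻¹' {p : Fin 3 × Fin 3 | p.1 ≠ p.2} := by
      rintro _ ⟨t, rfl⟩
      show (H (stoneCechUnit t)).1 ≠ (H (stoneCechUnit t)).2
      rw [extH t]
      exact fun h => hc t h.symm
    have hclosed : IsClosed (H ⁻¹' {p : Fin 3 × Fin 3 | p.1 ≠ p.2}) :=
      hSclosed.preimage (continuous_stoneCechExtend _)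
    have huniv : H ⁻¹' {p : Fin 3 × Fin 3 | p.1 ≠ p.2} = Set.univ := by
      have h4 := hclosed.closure_subset_iff.mpr hsub
      rw [(denseRange_stoneCechUnit (α := Γ)).closure_eq] at h4
      exact Set.eq_univ_of_univ_subset h4
    intro y
    have : y ∈ H ⁻¹' {p : Fin 3 × Fin 3 | p.1 ≠ p.2} := huniv ▸ Set.mem_univ y
    exact this
  have e1 : (H x).1 = F x := congrFun h1 x
  have e2 : (H x).2 = F (T x) := congrFun h2 x
  rw [hfix] at e2
  exact h3 x (e1.trans e2.symm)
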